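/- Let n ≥ 1 be an integer and let l₀, l₁, …, lₙ be nonnegative integers with L := l₀ + l₁ + ⋯ + lₙ > n. Then there exists a multivariate polynomial P in n variables Y₁, …, Yₙ with real coefficients, homogeneous of degree L − n, such that for every admissible tuple (y₁,…,yₙ) of real numbers one has Φₙ(l₀,…,lₙ; y₁,…,yₙ) = P(y₁,…,yₙ). -/

import Mathlib

open Finset MvPolynomial


/-- `S y a b = y_a + y_{a+1} + ⋯ + y_b`. -/
noncomputable def S (y : ℕ → ℝ) (a b : ℕ) : ℝ := ∑ t ∈ Finset.Icc a b, y t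

/-- `(y₁, …, yₙ)` is admissible if `S(a,b) ≠ 0` for all `1 ≤ a ≤ b ≤ n`. -/
def Admissible (n : ℕ) (y : ℕ → ℝ) : Prop :=
  ∀ a b : ℕ, 1 ≤ a → a ≤ b → b ≤ n → S y a b ≠ 0

/-- `Φₙ(l₀,…,lₙ; y₁,…,yₙ)`, the pointwise ε→0 value of the distributional sum of
Lemma 1 of the paper. -/
noncomputable def Phi (n : ℕ) (l : ℕ → ℕ) (y : ℕ → ℝ) : ℝ :=
  ∑ m ∈ Finset.range (n + 1),
    (-1 : ℝ) ^ m *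
      (∏ r ∈ Finset.range m, (-S y (r + 1) m) ^ l r / S y (r + 1) m) *
      (if l m = 0 then 1 else 0) *
      (∏ r ∈ Finset.Icc (m + 1) n, (S y (m + 1) r) ^ l r / S y (m + 1) r)

/-- Divided-difference polynomial (up to sign): for distinct points,
`∑ i ∈ s, x i ^ d * (∏ j ∈ s.erase i, (x j - x i))⁻¹ = eval x (DDpoly s d)`. -/
noncomputable def DDpoly : Finset ℕ → ℕ → MvPolynomial ℕ ℝ
  | s, 0 => if s.card ≤ 1 then ∑ i ∈ s, (MvPolynomial.X i : MvPolynomial ℕ ℝ) ^ (0:ℕ) else 0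
  | s, (d+1) =>
    if h : s.card ≤ 1 then ∑ i ∈ s, (MvPolynomial.X i : MvPolynomial ℕ ℝ) ^ (d+1)
    else
      MvPolynomial.X (s.min' (card_pos.mp (by omega))) * DDpoly s d
        - DDpoly (s.erase (s.min' (card_pos.mp (by omega)))) d
  termination_by s d => d

noncomputable def Esum (s : Finset ℕ) (x : ℕ → ℝ) (d : ℕ) : ℝ :=
  ∑ i ∈ s, x i ^ d * (∏ j ∈ s.erase i, (x j - x i))⁻¹

lemma Esum_succ (s : Finset ℕ) (x : ℕ → ℝ)
    (hx : ∀ i ∈ s, ∀ j ∈ s, i ≠ j → x i ≠ x j) {a : ℕ} (ha : a ∈ s) (d : ℕ) :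
    Esum s x (d + 1) = x a * Esum s x d - Esum (s.erase a) x d := by
  have key : x a * Esum s x d - Esum s x (d + 1) = Esum (s.erase a) x d := by
    rw [Esum, Esum, Esum, mul_sum, ← Finset.sum_sub_distrib]
    rw [← Finset.add_sum_erase _ _ ha]
    have h0 : x a * (x a ^ d * (∏ j ∈ s.erase a, (x j - x a))⁻¹)
        - x a ^ (d + 1) * (∏ j ∈ s.erase a, (x j - x a))⁻¹ = 0 := by ring
    rw [h0, zero_add]
    refine Finset.sum_congr rfl fun i hi => ?_
    have hia : i ∈ s := Finset.mem_of_mem_erase hi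
    have hne : a ≠ i := fun h => (Finset.ne_of_mem_erase hi) h.symm
    have hmem : a ∈ s.erase i := Finset.mem_erase.mpr ⟨hne, ha⟩
    have hxne : x a - x i ≠ 0 := sub_ne_zero.mpr (hx a ha i hia hne)
    have hprod : (∏ j ∈ s.erase i, (x j - x i))
        = (x a - x i) * ∏ j ∈ (s.erase i).erase a, (x j - x i) :=
      (Finset.mul_prod_erase _ _ hmem).symm
    rw [hprod, mul_inv, Finset.erase_right_comm]
    have hre : x a * (x i ^ d * ((x a - x i)⁻¹ * (∏ j ∈ (s.erase a).erase i, (x j - x i))⁻¹))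
        - x i ^ (d + 1) * ((x a - x i)⁻¹ * (∏ j ∈ (s.erase a).erase i, (x j - x i))⁻¹)
        = ((x a - x i) * (x a - x i)⁻¹) * (x i ^ d * (∏ j ∈ (s.erase a).erase i, (x j - x i))⁻¹) := by
      ring
    rw [hre, mul_inv_cancel₀ hxne, one_mul]
  linarith [key]
private lemma cancel₁ (c p q : ℝ) (hc : c ≠ 0) : c * (p * (c⁻¹ * q)) = p * q := by
  field_simp

lemma Esum_split (s : Finset ℕ) (x : ℕ → ℝ)
    (hx : ∀ i ∈ s, ∀ j ∈ s, i ≠ j → x i ≠ x j) {a b : ℕ} (ha : a ∈ s) (hb : b ∈ s)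
    (hab : a ≠ b) (d : ℕ) :
    (x b - x a) * Esum s x d = Esum (s.erase b) x d - Esum (s.erase a) x d := by
  have hbs : b ∈ s.erase a := Finset.mem_erase.mpr ⟨hab.symm, hb⟩
  have has : a ∈ s.erase b := Finset.mem_erase.mpr ⟨hab, ha⟩
  have hba : x b - x a ≠ 0 := sub_ne_zero.mpr (hx b hb a ha hab.symm)
  have hab' : x a - x b ≠ 0 := sub_ne_zero.mpr (hx a ha b hb hab)
  have hL : (x b - x a) * Esum s x d
      = (x b - x a) * (x a ^ d * (∏ j ∈ s.erase a, (x j - x a))⁻¹)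
        + ((x b - x a) * (x b ^ d * (∏ j ∈ s.erase b, (x j - x b))⁻¹)
        + ∑ i ∈ (s.erase a).erase b,
            (x b - x a) * (x i ^ d * (∏ j ∈ s.erase i, (x j - x i))⁻¹)) := by
    rw [Esum, mul_sum, ← Finset.add_sum_erase _ _ ha, ← Finset.add_sum_erase _ _ hbs]
  have hRb : Esum (s.erase b) x d
      = x a ^ d * (∏ j ∈ (s.erase a).erase b, (x j - x a))⁻¹
        + ∑ i ∈ (s.erase a).erase b,
            x i ^ d * (∏ j ∈ (s.erase b).erase i, (x j - x i))⁻¹ := by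
    rw [Esum, ← Finset.add_sum_erase _ _ has, Finset.erase_right_comm]
  have hRa : Esum (s.erase a) x d
      = x b ^ d * (∏ j ∈ (s.erase a).erase b, (x j - x b))⁻¹
        + ∑ i ∈ (s.erase a).erase b,
            x i ^ d * (∏ j ∈ (s.erase a).erase i, (x j - x i))⁻¹ := by
    rw [Esum, ← Finset.add_sum_erase _ _ hbs]
  have hA : (x b - x a) * (x a ^ d * (∏ j ∈ s.erase a, (x j - x a))⁻¹)
      = x a ^ d * (∏ j ∈ (s.erase a).erase b, (x j - x a))⁻¹ := by
    rw [← Finset.mul_prod_erase _ _ hbs, mul_inv, cancel₁ _ _ _ hba]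
  have hB : (x b - x a) * (x b ^ d * (∏ j ∈ s.erase b, (x j - x b))⁻¹)
      = -(x b ^ d * (∏ j ∈ (s.erase a).erase b, (x j - x b))⁻¹) := by
    rw [← Finset.mul_prod_erase _ _ has, Finset.erase_right_comm, mul_inv]
    have : x b - x a = -(x a - x b) := by ring
    rw [this, neg_mul, cancel₁ _ _ _ hab']
  have hI : ∀ i ∈ (s.erase a).erase b,
      (x b - x a) * (x i ^ d * (∏ j ∈ s.erase i, (x j - x i))⁻¹)
        = x i ^ d * (∏ j ∈ (s.erase b).erase i, (x j - x i))⁻¹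
          - x i ^ d * (∏ j ∈ (s.erase a).erase i, (x j - x i))⁻¹ := by
    intro i hi
    have hib : i ≠ b := Finset.ne_of_mem_erase hi
    have hia : i ≠ a := Finset.ne_of_mem_erase (Finset.mem_of_mem_erase hi)
    have his : i ∈ s := Finset.mem_of_mem_erase (Finset.mem_of_mem_erase hi)
    have hasi : a ∈ s.erase i := Finset.mem_erase.mpr ⟨hia.symm, ha⟩
    have hbsi : b ∈ (s.erase i).erase a := Finset.mem_erase.mpr ⟨hab.symm,
      Finset.mem_erase.mpr ⟨hib.symm, hb⟩⟩
    have hc1 : x a - x i ≠ 0 := sub_ne_zero.mpr (hx a ha i his hia.symm)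
    have hc2 : x b - x i ≠ 0 := sub_ne_zero.mpr (hx b hb i his hib.symm)
    set Q := ∏ j ∈ ((s.erase i).erase a).erase b, (x j - x i) with hQdef
    have hQ : Q ≠ 0 := by
      rw [hQdef]
      refine Finset.prod_ne_zero_iff.mpr fun j hj => ?_
      have hjs : j ∈ s := Finset.mem_of_mem_erase (Finset.mem_of_mem_erase
        (Finset.mem_of_mem_erase hj))
      have hji : j ≠ i := Finset.ne_of_mem_erase (Finset.mem_of_mem_erase
        (Finset.mem_of_mem_erase hj))
      exact sub_ne_zero.mpr (hx j hjs i his hji)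
    have hp0 : (∏ j ∈ s.erase i, (x j - x i)) = (x a - x i) * ((x b - x i) * Q) := by
      rw [hQdef, Finset.mul_prod_erase ((s.erase i).erase a) (fun j => x j - x i) hbsi,
        Finset.mul_prod_erase (s.erase i) (fun j => x j - x i) hasi]
    have e1 : ((s.erase b).erase i).erase a = ((s.erase i).erase a).erase b := by
      ext j; simp only [Finset.mem_erase]; tauto
    have e2 : ((s.erase a).erase i).erase b = ((s.erase i).erase a).erase b := by
      ext j; simp only [Finset.mem_erase]; tauto
    have hp1 : (∏ j ∈ (s.erase b).erase i, (x j - x i)) = (x a - x i) * Q := by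
      have hasbi : a ∈ (s.erase b).erase i := Finset.mem_erase.mpr ⟨hia.symm, has⟩
      rw [← Finset.mul_prod_erase _ _ hasbi, e1]
    have hp2 : (∏ j ∈ (s.erase a).erase i, (x j - x i)) = (x b - x i) * Q := by
      have hbsai : b ∈ (s.erase a).erase i := Finset.mem_erase.mpr ⟨hib.symm, hbs⟩
      rw [← Finset.mul_prod_erase _ _ hbsai, e2]
    rw [hp0, hp1, hp2]
    field_simp
    ring
  rw [hL, hRb, hRa, hA, hB, Finset.sum_congr rfl hI, Finset.sum_sub_distrib]
  ring
lemma DDpoly_small {s : Finset ℕ} (h : s.card ≤ 1) (d : ℕ) :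
    DDpoly s d = ∑ i ∈ s, MvPolynomial.X i ^ d := by
  cases d with
  | zero => rw [DDpoly, if_pos h]
  | succ d => rw [DDpoly, dif_pos h]

lemma DDpoly_zero {s : Finset ℕ} (h : ¬ s.card ≤ 1) : DDpoly s 0 = 0 := by
  rw [DDpoly, if_neg h]

lemma DDpoly_succ {s : Finset ℕ} (h : ¬ s.card ≤ 1) (d : ℕ) :
    DDpoly s (d + 1)
      = MvPolynomial.X (s.min' (Finset.card_pos.mp (by omega))) * DDpoly s d
        - DDpoly (s.erase (s.min' (Finset.card_pos.mp (by omega)))) d := by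
  rw [DDpoly, dif_neg h]

lemma eval_DDpoly_of_card_le {s : Finset ℕ} (h : s.card ≤ 1) (x : ℕ → ℝ) (d : ℕ) :
    MvPolynomial.eval x (DDpoly s d) = ∑ i ∈ s, x i ^ d := by
  rw [DDpoly_small h, map_sum]
  simp

lemma eval_DDpoly (x : ℕ → ℝ) :
    ∀ (s : Finset ℕ), (∀ i ∈ s, ∀ j ∈ s, i ≠ j → x i ≠ x j) → ∀ d : ℕ,
      Esum s x d = MvPolynomial.eval x (DDpoly s d) := by
  intro s
  induction s using Finset.strongInduction with
  | H s ih =>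
    intro hx d
    by_cases hcard : s.card ≤ 1
    · rw [eval_DDpoly_of_card_le hcard]
      interval_cases h : s.card
      · rw [Finset.card_eq_zero.mp h]
        simp [Esum]
      · obtain ⟨i, rfl⟩ := Finset.card_eq_one.mp h
        simp [Esum]
    · -- 2 ≤ s.card
      induction d with
      | zero =>
        rw [DDpoly_zero hcard, map_zero]
        obtain ⟨a, ha, b, hb, hab⟩ := Finset.one_lt_card.mp (show 1 < s.card by omega)
        have hba : x b - x a ≠ 0 := sub_ne_zero.mpr (hx b hb a ha (Ne.symm hab))
        have hsplit := Esum_split s x hx ha hb hab 0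
        have hxe : ∀ c : ℕ, ∀ i ∈ s.erase c, ∀ j ∈ s.erase c, i ≠ j → x i ≠ x j :=
          fun c i hi j hj hij =>
            hx i (Finset.mem_of_mem_erase hi) j (Finset.mem_of_mem_erase hj) hij
        have h1 := ih (s.erase b) (Finset.erase_ssubset hb) (hxe b) 0
        have h2 := ih (s.erase a) (Finset.erase_ssubset ha) (hxe a) 0
        have hcb : (s.erase b).card = s.card - 1 := Finset.card_erase_of_mem hb
        have hca : (s.erase a).card = s.card - 1 := Finset.card_erase_of_mem ha
        have heq : MvPolynomial.eval x (DDpoly (s.erase b) 0)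
            = MvPolynomial.eval x (DDpoly (s.erase a) 0) := by
          by_cases h : s.card - 1 ≤ 1
          · rw [eval_DDpoly_of_card_le (by omega) x 0, eval_DDpoly_of_card_le (by omega) x 0]
            simp only [pow_zero, Finset.sum_const, nsmul_eq_mul, mul_one]
            rw [hca, hcb]
          · rw [DDpoly_zero (by omega), DDpoly_zero (by omega)]
        rw [h1, h2, heq, sub_self] at hsplit
        have := mul_eq_zero.mp hsplit
        tauto
      | succ d ihd =>
        have hne : s.Nonempty := Finset.card_pos.mp (by omega)
        have hmem : s.min' hne ∈ s := Finset.min'_mem _ _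
        rw [DDpoly_succ hcard, map_sub, map_mul, MvPolynomial.eval_X]
        rw [Esum_succ s x hx hmem d, ihd]
        have hxe : ∀ i ∈ s.erase (s.min' hne),
            ∀ j ∈ s.erase (s.min' hne), i ≠ j → x i ≠ x j :=
          fun i hi j hj hij =>
            hx i (Finset.mem_of_mem_erase hi) j (Finset.mem_of_mem_erase hj) hij
        rw [ih _ (Finset.erase_ssubset hmem) hxe d]



noncomputable def sfun (y : ℕ → ℝ) (m : ℕ) : ℝ := ∑ t ∈ Finset.Ioc 0 m, y t

lemma S_shift (y : ℕ → ℝ) {r m : ℕ} (h : r ≤ m) :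
    S y (r + 1) m = sfun y m - sfun y r := by
  have := Finset.sum_Ioc_consecutive y (Nat.zero_le r) h
  rw [S, Finset.Icc_add_one_left_eq_Ioc, sfun, sfun]
  linarith

lemma sfun_sub_ne (n : ℕ) (y : ℕ → ℝ) (hy : Admissible n y) {r m : ℕ}
    (hr : r ≤ n) (hm : m ≤ n) (hrm : r ≠ m) : sfun y r - sfun y m ≠ 0 := by
  rcases Nat.lt_or_ge r m with h | h
  · have h1 : S y (r + 1) m ≠ 0 := hy (r + 1) m (Nat.le_add_left 1 r) h hm
    rw [S_shift y (Nat.le_of_lt h)] at h1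
    intro hc; apply h1; linarith
  · have hlt : m < r := lt_of_le_of_ne h (Ne.symm hrm)
    have h1 : S y (m + 1) r ≠ 0 := hy (m + 1) r (Nat.le_add_left 1 m) hlt hr
    rw [S_shift y (Nat.le_of_lt hlt)] at h1
    intro hc; apply h1; linarith

private lemma pow_mul_inv_eq (a : ℝ) (ha : a ≠ 0) {k : ℕ} (hk : 1 ≤ k) :
    a ^ k * a⁻¹ = a ^ (k - 1) := by
  conv_lhs => rw [show k = (k - 1) + 1 by omega]
  rw [pow_succ, mul_assoc, mul_inv_cancel₀ ha, mul_one]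

lemma Phi_eq (n : ℕ) (l : ℕ → ℕ) (y : ℕ → ℝ) (hy : Admissible n y) :
    Phi n l y = ∑ m ∈ (Finset.range (n + 1)).filter (fun m => l m = 0),
      (∏ r ∈ (Finset.range (n + 1)).filter (fun r => l r ≠ 0),
          (sfun y r - sfun y m) ^ (l r - 1))
        * (∏ r ∈ ((Finset.range (n + 1)).filter (fun m => l m = 0)).erase m,
            (sfun y r - sfun y m))⁻¹ := by
  have step1 : Phi n l y = ∑ m ∈ Finset.range (n + 1),
      (if l m = 0 then
        ∏ r ∈ (Finset.range (n + 1)).erase m,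
          ((sfun y r - sfun y m) ^ l r * (sfun y r - sfun y m)⁻¹)
      else 0) := by
    rw [Phi]
    refine Finset.sum_congr rfl fun m hm => ?_
    have hmn : m ≤ n := by simpa using Nat.lt_succ_iff.mp (Finset.mem_range.mp hm)
    by_cases hlm : l m = 0
    · rw [if_pos hlm, if_pos hlm, mul_one]
      have hP1 : (∏ r ∈ Finset.range m, (-S y (r + 1) m) ^ l r / S y (r + 1) m)
          = (-1 : ℝ) ^ m * ∏ r ∈ Finset.range m,
              ((sfun y r - sfun y m) ^ l r * (sfun y r - sfun y m)⁻¹) := by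
        have hc : ∀ r ∈ Finset.range m, (-S y (r + 1) m) ^ l r / S y (r + 1) m
            = (-1 : ℝ) * ((sfun y r - sfun y m) ^ l r * (sfun y r - sfun y m)⁻¹) := by
          intro r hr
          have hrm : r < m := Finset.mem_range.mp hr
          rw [S_shift y (Nat.le_of_lt hrm)]
          have h1 : -(sfun y m - sfun y r) = sfun y r - sfun y m := by ring
          have h2 : sfun y m - sfun y r = -(sfun y r - sfun y m) := by ring
          rw [h1, div_eq_mul_inv, h2, inv_neg]
          ring
        rw [Finset.prod_congr rfl hc, Finset.prod_mul_distrib, Finset.prod_const,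
          Finset.card_range]
      have hP2 : (∏ r ∈ Finset.Icc (m + 1) n, (S y (m + 1) r) ^ l r / S y (m + 1) r)
          = ∏ r ∈ Finset.Icc (m + 1) n,
              ((sfun y r - sfun y m) ^ l r * (sfun y r - sfun y m)⁻¹) := by
        refine Finset.prod_congr rfl fun r hr => ?_
        have hmr : m + 1 ≤ r := (Finset.mem_Icc.mp hr).1
        rw [show S y (m+1) r = sfun y r - sfun y m from S_shift y (by omega), div_eq_mul_inv]
      rw [hP1, hP2]
      have hsplit : (Finset.range (n + 1)).erase m = Finset.range m ∪ Finset.Icc (m + 1) n := by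
        ext j
        simp only [Finset.mem_erase, Finset.mem_range, Finset.mem_union, Finset.mem_Icc]
        omega
      have hdisj : Disjoint (Finset.range m) (Finset.Icc (m + 1) n) := by
        rw [Finset.disjoint_left]
        intro j hj hj'
        simp only [Finset.mem_range] at hj
        simp only [Finset.mem_Icc] at hj'
        omega
      rw [hsplit, Finset.prod_union hdisj]
      have hpow : ((-1 : ℝ) ^ m) * ((-1 : ℝ) ^ m) = 1 := by
        rw [← mul_pow]; norm_num
      calc (-1:ℝ)^m * ((-1:ℝ)^m * ∏ r ∈ Finset.range m,
              ((sfun y r - sfun y m) ^ l r * (sfun y r - sfun y m)⁻¹))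
            * ∏ r ∈ Finset.Icc (m+1) n, ((sfun y r - sfun y m) ^ l r * (sfun y r - sfun y m)⁻¹)
          = ((-1:ℝ)^m * (-1:ℝ)^m) * ((∏ r ∈ Finset.range m,
              ((sfun y r - sfun y m) ^ l r * (sfun y r - sfun y m)⁻¹))
            * ∏ r ∈ Finset.Icc (m+1) n,
              ((sfun y r - sfun y m) ^ l r * (sfun y r - sfun y m)⁻¹)) := by ring
        _ = _ := by rw [hpow, one_mul]
    · rw [if_neg hlm, if_neg hlm, mul_zero, zero_mul]
  rw [step1, ← Finset.sum_filter]
  refine Finset.sum_congr rfl fun m hm => ?_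
  obtain ⟨hmr, hlm⟩ := Finset.mem_filter.mp hm
  have hmn : m ≤ n := Nat.lt_succ_iff.mp (Finset.mem_range.mp hmr)
  rw [← Finset.prod_filter_mul_prod_filter_not ((Finset.range (n+1)).erase m)
    (fun r => l r = 0)]
  have hfe : ((Finset.range (n+1)).erase m).filter (fun r => l r = 0)
      = ((Finset.range (n+1)).filter (fun m => l m = 0)).erase m := by
    rw [Finset.filter_erase]
  have hfB : ((Finset.range (n+1)).erase m).filter (fun r => ¬ l r = 0)
      = (Finset.range (n+1)).filter (fun r => l r ≠ 0) := by
    ext j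
    simp only [Finset.mem_filter, Finset.mem_erase, Ne]
    constructor
    · rintro ⟨⟨-, hj⟩, hlj⟩; exact ⟨hj, hlj⟩
    · rintro ⟨hj, hlj⟩
      refine ⟨⟨fun hc => hlj (hc ▸ hlm), hj⟩, hlj⟩
  rw [hfe, hfB]
  have hA : (∏ r ∈ ((Finset.range (n+1)).filter (fun m => l m = 0)).erase m,
      ((sfun y r - sfun y m) ^ l r * (sfun y r - sfun y m)⁻¹))
      = (∏ r ∈ ((Finset.range (n+1)).filter (fun m => l m = 0)).erase m,
          (sfun y r - sfun y m))⁻¹ := by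
    rw [← Finset.prod_inv_distrib]
    refine Finset.prod_congr rfl fun r hr => ?_
    have hlr : l r = 0 := (Finset.mem_filter.mp (Finset.mem_of_mem_erase hr)).2
    rw [hlr, pow_zero, one_mul]
  have hB : (∏ r ∈ (Finset.range (n+1)).filter (fun r => l r ≠ 0),
      ((sfun y r - sfun y m) ^ l r * (sfun y r - sfun y m)⁻¹))
      = ∏ r ∈ (Finset.range (n+1)).filter (fun r => l r ≠ 0),
          (sfun y r - sfun y m) ^ (l r - 1) := by
    refine Finset.prod_congr rfl fun r hr => ?_
    obtain ⟨hrr, hlr⟩ := Finset.mem_filter.mp hr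
    have hrn : r ≤ n := Nat.lt_succ_iff.mp (Finset.mem_range.mp hrr)
    have hrm : r ≠ m := fun hc => hlr (hc ▸ hlm)
    exact pow_mul_inv_eq _ (sfun_sub_ne n y hy hrn hmn hrm) (Nat.one_le_iff_ne_zero.mpr hlr)
  rw [hA, hB, mul_comm]

def Aset (n : ℕ) (l : ℕ → ℕ) : Finset ℕ := (Finset.range (n + 1)).filter (fun m => l m = 0)

def Bset (n : ℕ) (l : ℕ → ℕ) : Finset ℕ := (Finset.range (n + 1)).filter (fun r => l r ≠ 0)

noncomputable def sigmaP (n : ℕ) (m : ℕ) : MvPolynomial (Fin n) ℝ :=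
  ∑ i : Fin n, if (i : ℕ) + 1 ≤ m then MvPolynomial.X i else 0

noncomputable def Gpoly (n : ℕ) (l : ℕ → ℕ) : Polynomial (MvPolynomial (Fin n) ℝ) :=
  ∏ r ∈ Bset n l, (Polynomial.C (sigmaP n r) - Polynomial.X) ^ (l r - 1)

noncomputable def Ppoly (n : ℕ) (l : ℕ → ℕ) : MvPolynomial (Fin n) ℝ :=
  ∑ d ∈ Finset.range ((Gpoly n l).natDegree + 1),
    (Gpoly n l).coeff d * (MvPolynomial.bind₁ (fun m => sigmaP n m)) (DDpoly (Aset n l) d)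

lemma eval_sigmaP (n : ℕ) (y : ℕ → ℝ) {m : ℕ} (hm : m ≤ n) :
    MvPolynomial.eval (fun i : Fin n => y (i.1 + 1)) (sigmaP n m) = sfun y m := by
  rw [sigmaP, map_sum]
  have h1 : ∀ i : Fin n, MvPolynomial.eval (fun i : Fin n => y (i.1 + 1))
      (if (i : ℕ) + 1 ≤ m then MvPolynomial.X i else 0)
      = if (i : ℕ) + 1 ≤ m then y (i.1 + 1) else 0 := by
    intro i
    by_cases h : (i : ℕ) + 1 ≤ m <;> simp [h]
  rw [Finset.sum_congr rfl (fun i _ => h1 i)]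
  rw [Fin.sum_univ_eq_sum_range (fun i => if i + 1 ≤ m then y (i + 1) else 0) n]
  rw [← Finset.sum_filter]
  have h2 : (Finset.range n).filter (fun i => i + 1 ≤ m) = Finset.range m := by
    ext j; simp only [Finset.mem_filter, Finset.mem_range]; omega
  rw [h2, sfun]
  refine Finset.sum_nbij' (fun i => i + 1) (fun t => t - 1) ?_ ?_ ?_ ?_ ?_
  · intro a ha; simp only [Finset.mem_range] at ha; simp only [Finset.mem_Ioc]; omega
  · intro a ha; simp only [Finset.mem_Ioc] at ha; simp only [Finset.mem_range]; omega
  · intro a ha; show a + 1 - 1 = a; omega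
  · intro a ha; simp only [Finset.mem_Ioc] at ha; show a - 1 + 1 = a; omega
  · intro a ha; rfl

lemma Phi_eq_eval (n : ℕ) (l : ℕ → ℕ) (y : ℕ → ℝ) (hy : Admissible n y) :
    Phi n l y = MvPolynomial.eval (fun i : Fin n => y (i.1 + 1)) (Ppoly n l) := by
  classical
  set y' : Fin n → ℝ := fun i => y (i.1 + 1) with hy'def
  set x : ℕ → ℝ := fun m => MvPolynomial.eval y' (sigmaP n m) with hxdef
  have hmem_le : ∀ m ∈ Finset.range (n + 1), m ≤ n := fun m hm =>
    Nat.lt_succ_iff.mp (Finset.mem_range.mp hm)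
  have hxA : ∀ m ∈ Aset n l, x m = sfun y m := by
    intro m hm
    exact eval_sigmaP n y (hmem_le m (Finset.mem_filter.mp hm).1)
  have hxinj : ∀ i ∈ Aset n l, ∀ j ∈ Aset n l, i ≠ j → x i ≠ x j := by
    intro i hi j hj hij
    rw [hxA i hi, hxA j hj]
    have h := sfun_sub_ne n y hy (hmem_le i (Finset.mem_filter.mp hi).1)
      (hmem_le j (Finset.mem_filter.mp hj).1) hij
    intro hc; exact h (by rw [hc]; ring)
  have hEs : ∀ d : ℕ, Esum (Aset n l) x d
      = ∑ m ∈ Aset n l, (sfun y m) ^ d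
          * (∏ j ∈ (Aset n l).erase m, (sfun y j - sfun y m))⁻¹ := by
    intro d
    rw [Esum]
    refine Finset.sum_congr rfl fun m hm => ?_
    rw [hxA m hm]
    rw [Finset.prod_congr rfl (fun j hj => show x j - sfun y m = sfun y j - sfun y m by
      rw [hxA j (Finset.mem_of_mem_erase hj)])]
  have hbind : ∀ q : MvPolynomial ℕ ℝ,
      MvPolynomial.eval y' (MvPolynomial.bind₁ (fun m => sigmaP n m) q)
        = MvPolynomial.eval x q :=
    fun q => MvPolynomial.eval₂Hom_bind₁ (RingHom.id ℝ) y' (fun m => sigmaP n m) q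
  have hRHS : MvPolynomial.eval y' (Ppoly n l)
      = ∑ d ∈ Finset.range ((Gpoly n l).natDegree + 1),
          MvPolynomial.eval y' ((Gpoly n l).coeff d) * Esum (Aset n l) x d := by
    rw [Ppoly, map_sum]
    refine Finset.sum_congr rfl fun d _ => ?_
    rw [map_mul, hbind, eval_DDpoly x (Aset n l) hxinj d]
  rw [hRHS]
  have hswap : ∑ d ∈ Finset.range ((Gpoly n l).natDegree + 1),
      MvPolynomial.eval y' ((Gpoly n l).coeff d) * Esum (Aset n l) x d
      = ∑ m ∈ Aset n l,
          (Polynomial.eval (sfun y m)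
            ((Gpoly n l).map (MvPolynomial.eval y' : MvPolynomial (Fin n) ℝ →+* ℝ)))
          * (∏ j ∈ (Aset n l).erase m, (sfun y j - sfun y m))⁻¹ := by
    have h1 : ∀ d ∈ Finset.range ((Gpoly n l).natDegree + 1),
        MvPolynomial.eval y' ((Gpoly n l).coeff d) * Esum (Aset n l) x d
        = ∑ m ∈ Aset n l, MvPolynomial.eval y' ((Gpoly n l).coeff d)
            * ((sfun y m) ^ d * (∏ j ∈ (Aset n l).erase m, (sfun y j - sfun y m))⁻¹) := by
      intro d _
      rw [hEs d, Finset.mul_sum]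
    rw [Finset.sum_congr rfl h1, Finset.sum_comm]
    refine Finset.sum_congr rfl fun m _ => ?_
    rw [Polynomial.eval_eq_sum_range' (lt_of_le_of_lt
      Polynomial.natDegree_map_le (Nat.lt_succ_self _)), Finset.sum_mul]
    refine Finset.sum_congr rfl fun d _ => ?_
    rw [Polynomial.coeff_map]
    ring
  rw [hswap]
  have hG : ∀ m ∈ Aset n l,
      Polynomial.eval (sfun y m)
        ((Gpoly n l).map (MvPolynomial.eval y' : MvPolynomial (Fin n) ℝ →+* ℝ))
      = ∏ r ∈ Bset n l, (sfun y r - sfun y m) ^ (l r - 1) := by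
    intro m _
    rw [Gpoly, Polynomial.map_prod]
    rw [Polynomial.eval_prod]
    refine Finset.prod_congr rfl fun r hr => ?_
    rw [Polynomial.map_pow, Polynomial.map_sub, Polynomial.map_C, Polynomial.map_X,
      Polynomial.eval_pow, Polynomial.eval_sub, Polynomial.eval_C, Polynomial.eval_X,
      eval_sigmaP n y (hmem_le r (Finset.mem_filter.mp hr).1)]
  rw [Finset.sum_congr rfl fun m hm => by rw [hG m hm]]
  exact Phi_eq n l y hy

lemma Admissible_smul {n : ℕ} {y : ℕ → ℝ} (hy : Admissible n y) {t : ℝ} (ht : t ≠ 0) :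
    Admissible n (fun i => t * y i) := by
  intro a b ha hab hbn
  have : S (fun i => t * y i) a b = t * S y a b := by
    rw [S, S, Finset.mul_sum]
  rw [this]
  exact mul_ne_zero ht (hy a b ha hab hbn)

private lemma factor_scale (t a : ℝ) (ht : t ≠ 0) (ha : a ≠ 0) (k : ℕ) :
    t * ((-(t * a)) ^ k / (t * a)) = t ^ k * ((-a) ^ k / a) := by
  rw [show -(t * a) = (-a) * t by ring, mul_pow]
  field_simp

lemma Phi_smul (n : ℕ) (l : ℕ → ℕ) (y : ℕ → ℝ) (hy : Admissible n y) {t : ℝ} (ht : t ≠ 0)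
    (hL : n < ∑ r ∈ Finset.range (n + 1), l r) :
    Phi n l (fun i => t * y i)
      = t ^ (∑ r ∈ Finset.range (n + 1), l r - n) * Phi n l y := by
  set L := ∑ r ∈ Finset.range (n + 1), l r with hLdef
  have hS : ∀ a b : ℕ, S (fun i => t * y i) a b = t * S y a b := by
    intro a b; rw [S, S, Finset.mul_sum]
  have key : t ^ n * Phi n l (fun i => t * y i) = t ^ L * Phi n l y := by
    rw [Phi, Phi, Finset.mul_sum, Finset.mul_sum]
    refine Finset.sum_congr rfl fun m hm => ?_
    have hmn : m ≤ n := Nat.lt_succ_iff.mp (Finset.mem_range.mp hm)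
    by_cases hlm : l m = 0
    · rw [if_pos hlm]
      have hP1 : t ^ m * (∏ r ∈ Finset.range m,
          (-S (fun i => t * y i) (r + 1) m) ^ l r / S (fun i => t * y i) (r + 1) m)
          = t ^ (∑ r ∈ Finset.range m, l r) * ∏ r ∈ Finset.range m,
              (-S y (r + 1) m) ^ l r / S y (r + 1) m := by
        rw [← Finset.prod_pow_eq_pow_sum, ← Finset.prod_mul_distrib]
        rw [show t ^ m = ∏ _r ∈ Finset.range m, t by
          rw [Finset.prod_const, Finset.card_range]]
        rw [← Finset.prod_mul_distrib]
        refine Finset.prod_congr rfl fun r hr => ?_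
        have hrm : r < m := Finset.mem_range.mp hr
        have hSne : S y (r + 1) m ≠ 0 := hy (r + 1) m (Nat.le_add_left 1 r) hrm hmn
        rw [hS (r + 1) m]
        exact factor_scale t _ ht hSne (l r)
      have hP2 : t ^ (n - m) * (∏ r ∈ Finset.Icc (m + 1) n,
          (S (fun i => t * y i) (m + 1) r) ^ l r / S (fun i => t * y i) (m + 1) r)
          = t ^ (∑ r ∈ Finset.Icc (m + 1) n, l r) * ∏ r ∈ Finset.Icc (m + 1) n,
              (S y (m + 1) r) ^ l r / S y (m + 1) r := by
        rw [← Finset.prod_pow_eq_pow_sum, ← Finset.prod_mul_distrib]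
        rw [show t ^ (n - m) = ∏ _r ∈ Finset.Icc (m + 1) n, t by
          rw [Finset.prod_const, Nat.card_Icc]; congr 1; omega]
        rw [← Finset.prod_mul_distrib]
        refine Finset.prod_congr rfl fun r hr => ?_
        have hmr : m + 1 ≤ r ∧ r ≤ n := Finset.mem_Icc.mp hr
        have hSne : S y (m + 1) r ≠ 0 := hy (m + 1) r (Nat.le_add_left 1 m) hmr.1 hmr.2
        rw [hS (m + 1) r]
        rw [mul_pow]
        field_simp
      have hsplit : (Finset.range (n + 1)).erase m = Finset.range m ∪ Finset.Icc (m + 1) n := by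
        ext j
        simp only [Finset.mem_erase, Finset.mem_range, Finset.mem_union, Finset.mem_Icc]
        omega
      have hdisj : Disjoint (Finset.range m) (Finset.Icc (m + 1) n) := by
        rw [Finset.disjoint_left]
        intro j hj hj'
        simp only [Finset.mem_range] at hj
        simp only [Finset.mem_Icc] at hj'
        omega
      have hsum : (∑ r ∈ Finset.range m, l r) + (∑ r ∈ Finset.Icc (m + 1) n, l r) = L := by
        have h1 := Finset.add_sum_erase _ l hm
        rw [hsplit, Finset.sum_union hdisj] at h1
        omega
      calc t ^ n * ((-1:ℝ) ^ m * (∏ r ∈ Finset.range m,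
              (-S (fun i => t * y i) (r + 1) m) ^ l r / S (fun i => t * y i) (r + 1) m) * 1 *
              ∏ r ∈ Finset.Icc (m + 1) n,
                (S (fun i => t * y i) (m + 1) r) ^ l r / S (fun i => t * y i) (m + 1) r)
          = (-1:ℝ) ^ m * ((t ^ m * ∏ r ∈ Finset.range m,
              (-S (fun i => t * y i) (r + 1) m) ^ l r / S (fun i => t * y i) (r + 1) m)
            * (t ^ (n - m) * ∏ r ∈ Finset.Icc (m + 1) n,
              (S (fun i => t * y i) (m + 1) r) ^ l r / S (fun i => t * y i) (m + 1) r)) := by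
            rw [show t ^ n = t ^ m * t ^ (n - m) by rw [← pow_add]; congr 1; omega]
            ring
        _ = (-1:ℝ) ^ m * ((t ^ (∑ r ∈ Finset.range m, l r) * ∏ r ∈ Finset.range m,
              (-S y (r + 1) m) ^ l r / S y (r + 1) m)
            * (t ^ (∑ r ∈ Finset.Icc (m + 1) n, l r) * ∏ r ∈ Finset.Icc (m + 1) n,
              (S y (m + 1) r) ^ l r / S y (m + 1) r)) := by rw [hP1, hP2]
        _ = t ^ L * ((-1:ℝ) ^ m * (∏ r ∈ Finset.range m,
              (-S y (r + 1) m) ^ l r / S y (r + 1) m) * 1 *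
              ∏ r ∈ Finset.Icc (m + 1) n, (S y (m + 1) r) ^ l r / S y (m + 1) r) := by
            rw [show t ^ L = t ^ (∑ r ∈ Finset.range m, l r)
              * t ^ (∑ r ∈ Finset.Icc (m + 1) n, l r) by rw [← pow_add, hsum]]
            ring
    · rw [if_neg hlm]; ring
  have hLn : L - n + n = L := by omega
  have : t ^ n * Phi n l (fun i => t * y i) = t ^ n * (t ^ (L - n) * Phi n l y) := by
    rw [key, show t ^ L = t ^ n * t ^ (L - n) by rw [← pow_add]; congr 1; omega]
    ring
  exact mul_left_cancel₀ (pow_ne_zero n ht) this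

lemma homog_eval_smul {n d : ℕ} {p : MvPolynomial (Fin n) ℝ} (hp : p.IsHomogeneous d)
    (t : ℝ) (z : Fin n → ℝ) :
    MvPolynomial.eval (fun i => t * z i) p = t ^ d * MvPolynomial.eval z p := by
  rw [MvPolynomial.eval_eq', MvPolynomial.eval_eq', Finset.mul_sum]
  refine Finset.sum_congr rfl fun c hc => ?_
  have hcc : MvPolynomial.coeff c p ≠ 0 := MvPolynomial.mem_support_iff.mp hc
  have hdeg : ∑ i, c i = d := by
    have h1 := hp hcc
    change (Finsupp.weight (fun _ => 1)) c = d at h1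
    rw [← Finsupp.degree_eq_weight_one] at h1
    rw [← h1, Finsupp.degree_eq_sum]
  calc MvPolynomial.coeff c p * ∏ i, (t * z i) ^ c i
      = MvPolynomial.coeff c p * ((∏ i, t ^ c i) * ∏ i, (z i) ^ c i) := by
        rw [← Finset.prod_mul_distrib]
        congr 1
        exact Finset.prod_congr rfl fun i _ => mul_pow t (z i) (c i)
    _ = t ^ d * (MvPolynomial.coeff c p * ∏ i, (z i) ^ c i) := by
        rw [Finset.prod_pow_eq_pow_sum, hdeg]
        ring


/-- if `L = l₀ + ⋯ + lₙ > n`, then there is a real polynomial `P`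
in `n` variables, homogeneous of degree `L − n`, with
`Φₙ(l₀,…,lₙ; y₁,…,yₙ) = P(y₁,…,yₙ)` for every admissible tuple. The variable
`Yᵢ` (for `i : Fin n`) is evaluated at `y (i+1)`. -/
theorem Phi_eq_homogeneous_poly_of_sum_gt (n : ℕ) (hn : 1 ≤ n) (l : ℕ → ℕ)
    (hL : n < ∑ r ∈ Finset.range (n + 1), l r) :
    ∃ P : MvPolynomial (Fin n) ℝ,
      P.IsHomogeneous (∑ r ∈ Finset.range (n + 1), l r - n) ∧
      ∀ y : ℕ → ℝ, Admissible n y →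
        Phi n l y = MvPolynomial.eval (fun i : Fin n => y (i.val + 1)) P := by
  classical
  set L := ∑ r ∈ Finset.range (n + 1), l r with hLdef
  set D := L - n with hDdef
  set P₀ := Ppoly n l with hP₀
  refine ⟨MvPolynomial.homogeneousComponent D P₀,
    MvPolynomial.homogeneousComponent_isHomogeneous D P₀, ?_⟩
  intro y hy
  set y' : Fin n → ℝ := fun i => y (i.val + 1) with hy'def
  have hPhi0 : Phi n l y = MvPolynomial.eval y' P₀ := Phi_eq_eval n l y hy
  set T := P₀.totalDegree with hT
  set q₁ : Polynomial ℝ := ∑ d ∈ Finset.range (T + 1),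
    Polynomial.C (MvPolynomial.eval y' (MvPolynomial.homogeneousComponent d P₀))
      * Polynomial.X ^ d with hq₁
  set q₂ : Polynomial ℝ := Polynomial.C (MvPolynomial.eval y' P₀) * Polynomial.X ^ D with hq₂
  have hqeq : ∀ t : ℝ, t ≠ 0 → q₁.eval t = q₂.eval t := by
    intro t ht
    have h1 : q₁.eval t = MvPolynomial.eval (fun i => t * y' i) P₀ := by
      conv_rhs => rw [← MvPolynomial.sum_homogeneousComponent P₀]
      rw [map_sum, hq₁, Polynomial.eval_finset_sum]
      refine Finset.sum_congr rfl fun d _ => ?_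
      rw [Polynomial.eval_mul, Polynomial.eval_C, Polynomial.eval_pow, Polynomial.eval_X,
        homog_eval_smul (MvPolynomial.homogeneousComponent_isHomogeneous d P₀) t y']
      ring
    have h2 : MvPolynomial.eval (fun i => t * y' i) P₀ = t ^ D * MvPolynomial.eval y' P₀ := by
      have ha : Admissible n (fun i => t * y i) := Admissible_smul hy ht
      have hb := Phi_eq_eval n l (fun i => t * y i) ha
      have hc := Phi_smul n l y hy ht hL
      rw [hc, hPhi0] at hb
      exact hb.symm
    rw [h1, h2, hq₂, Polynomial.eval_mul, Polynomial.eval_C, Polynomial.eval_pow,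
      Polynomial.eval_X]
    ring
  have hq12 : q₁ = q₂ := by
    apply Polynomial.eq_of_infinite_eval_eq
    apply Set.Infinite.mono (s := ({0}ᶜ : Set ℝ))
    · intro t ht
      exact hqeq t ht
    · exact (Set.finite_singleton (0:ℝ)).infinite_compl
  have hcoeff := congrArg (fun q : Polynomial ℝ => q.coeff D) hq12
  simp only [hq₁, hq₂, Polynomial.finset_sum_coeff, Polynomial.coeff_C_mul,
    Polynomial.coeff_X_pow] at hcoeff
  rw [Finset.sum_congr rfl (fun d _ => by
    rw [mul_ite, mul_one, mul_zero] :
      ∀ d ∈ Finset.range (T + 1), _ = if D = d then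
        MvPolynomial.eval y' (MvPolynomial.homogeneousComponent d P₀) else 0)] at hcoeff
  rw [Finset.sum_ite_eq] at hcoeff
  simp only [if_true, mul_one] at hcoeff
  by_cases hDT : D ∈ Finset.range (T + 1)
  · rw [if_pos hDT] at hcoeff
    rw [hPhi0]
    exact hcoeff.symm
  · rw [if_neg hDT] at hcoeff
    have hz : MvPolynomial.homogeneousComponent D P₀ = 0 :=
      MvPolynomial.homogeneousComponent_eq_zero _ _ (by
        simp only [Finset.mem_range] at hDT; omega)
    rw [hPhi0, hz, map_zero]
    exact hcoeff.symm
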